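/- Let n be a positive integer, C ≤ F₂^{2n} a self-dual binary code, and σ = (1,2)(3,4)⋯(2n−1,2n) the coordinate permutation swapping 2i−1 and 2i for each i, with σ(C) = C. Define π(C(σ)) = {(c₁,…,c_n) ∈ F₂ⁿ : (c₁,c₁,c₂,c₂,…,c_n,c_n) ∈ C} and π({c + σ(c) : c ∈ C}) = {(d₂, d₄, …, d_{2n}) : d = c + σ(c) for some c ∈ C}. Then π({c + σ(c) : c ∈ C}) = π(C(σ))⊥; in particular π({c + σ(c) : c ∈ C}) ⊆ π(C(σ)). -/

import Mathlib

/-- The fixed point free involution `(1,2)(3,4)⋯(2n-1,2n)` of the `2n`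
coordinates (0-indexed: it swaps `2k` and `2k+1`). -/
def pairSwap (n : ℕ) : Equiv.Perm (Fin (2 * n)) where
  toFun i := ⟨2 * (i.val / 2) + (1 - i.val % 2), by have := i.isLt; omega⟩
  invFun i := ⟨2 * (i.val / 2) + (1 - i.val % 2), by have := i.isLt; omega⟩
  left_inv i := by
    apply Fin.ext
    simp only []
    omega
  right_inv i := by
    apply Fin.ext
    simp only []
    omega

/-- The linear map sending `(c₁, …, c_n)` to `(c₁, c₁, c₂, c₂, …, c_n, c_n)`. -/
def doubleMap (n : ℕ) : (Fin n → ZMod 2) →ₗ[ZMod 2] (Fin (2 * n) → ZMod 2) where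
  toFun c := fun i => c ⟨i.val / 2, by have := i.isLt; omega⟩
  map_add' := fun _ _ => rfl
  map_smul' := fun _ _ => rfl

/-- The dual code of a binary linear code. -/
def dualCode {n : ℕ} (D : Submodule (ZMod 2) (Fin n → ZMod 2)) :
    Submodule (ZMod 2) (Fin n → ZMod 2) where
  carrier := {v | ∀ c ∈ D, ∑ i, v i * c i = 0}
  zero_mem' := by intro c hc; simp
  add_mem' := by
    intro a b ha hb c hc
    simp [add_mul, Finset.sum_add_distrib, ha c hc, hb c hc]
  smul_mem' := by
    intro r a ha c hc
    simp [mul_assoc, ← Finset.mul_sum, ha c hc]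

/-- The linear map sending `c` to the vector of even-indexed (1-indexed)
coordinates `(d₂, d₄, …, d_{2n})` of `d = c + σ(c)`, where
`σ = (1,2)(3,4)⋯(2n-1,2n)`; here `σ(c) = c ∘ σ⁻¹`. -/
def projSumMap (n : ℕ) : (Fin (2 * n) → ZMod 2) →ₗ[ZMod 2] (Fin n → ZMod 2) where
  toFun c := fun j =>
    c ⟨2 * j.val + 1, by have := j.isLt; omega⟩ +
      c ((pairSwap n)⁻¹ ⟨2 * j.val + 1, by have := j.isLt; omega⟩)
  map_add' := by
    intro a b
    funext j
    simp only [Pi.add_apply]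
    ring
  map_smul' := by
    intro r a
    funext j
    simp only [Pi.smul_apply, RingHom.id_apply, smul_eq_mul]
    ring

open Module

/- ### dot form and dual code dimensions -/

def dotForm (m : ℕ) : LinearMap.BilinForm (ZMod 2) (Fin m → ZMod 2) :=
  LinearMap.mk₂ (ZMod 2) (fun v w => ∑ i, v i * w i)
    (by intro a b c; simp [add_mul, Finset.sum_add_distrib])
    (by intro r a b; simp [Finset.mul_sum, mul_assoc])
    (by intro a b c; simp [mul_add, Finset.sum_add_distrib])
    (by intro r a b; simp [Finset.mul_sum, mul_assoc, mul_left_comm])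

lemma dotForm_apply (m : ℕ) (v w : Fin m → ZMod 2) :
    dotForm m v w = ∑ i, v i * w i := rfl

lemma dotForm_isRefl (m : ℕ) : (dotForm m).IsRefl := by
  intro x y h
  simpa [dotForm_apply, mul_comm] using h

lemma dotForm_nondegenerate (m : ℕ) : (dotForm m).Nondegenerate := by
  constructor
  · intro v hv
    funext i
    have := hv (Pi.single i 1)
    simpa [dotForm_apply, Pi.single_apply, mul_comm] using this
  · intro v hv
    funext i
    have := hv (Pi.single i 1)
    simpa [dotForm_apply, Pi.single_apply, mul_comm] using this

lemma dualCode_eq_orthogonal {m : ℕ} (D : Submodule (ZMod 2) (Fin m → ZMod 2)) :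
    dualCode D = (dotForm m).orthogonal D := by
  ext v
  constructor
  · intro hv c hc
    have := hv c hc
    simpa [LinearMap.BilinForm.IsOrtho, dotForm_apply, mul_comm] using this
  · intro hv c hc
    have := hv c hc
    simpa [LinearMap.BilinForm.IsOrtho, dotForm_apply, mul_comm] using this

lemma finrank_dualCode {m : ℕ} (D : Submodule (ZMod 2) (Fin m → ZMod 2)) :
    finrank (ZMod 2) (dualCode D) = m - finrank (ZMod 2) D := by
  rw [dualCode_eq_orthogonal]
  rw [LinearMap.BilinForm.finrank_orthogonal (dotForm_nondegenerate m) D]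
  simp

/- ### index juggling -/

lemma finMkEq {n x : ℕ} (h : x < n) {j : Fin n} (hx : x = j.val) :
    (⟨x, h⟩ : Fin n) = j := Fin.ext hx

lemma pairSwap_inv_odd {n : ℕ} (j : ℕ) (h : 2 * j + 1 < 2 * n) :
    (pairSwap n)⁻¹ ⟨2 * j + 1, h⟩ = ⟨2 * j, by omega⟩ := by
  apply Fin.ext
  show 2 * ((2 * j + 1) / 2) + (1 - (2 * j + 1) % 2) = 2 * j
  omega

def pairEquiv (n : ℕ) : Fin n × Fin 2 ≃ Fin (2 * n) where
  toFun p := ⟨2 * p.1.val + p.2.val, by have := p.1.isLt; have := p.2.isLt; omega⟩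
  invFun i := (⟨i.val / 2, by have := i.isLt; omega⟩, ⟨i.val % 2, by omega⟩)
  left_inv p := by
    obtain ⟨j, k⟩ := p
    have := k.isLt
    ext <;> simp <;> omega
  right_inv i := by
    apply Fin.ext
    simp
    omega

lemma sum_pairs {M : Type*} [AddCommMonoid M] (n : ℕ) (f : Fin (2 * n) → M) :
    ∑ i, f i = ∑ j : Fin n,
      (f ⟨2 * j.val, by have := j.isLt; omega⟩ + f ⟨2 * j.val + 1, by have := j.isLt; omega⟩) := by
  rw [← Equiv.sum_comp (pairEquiv n) f, Fintype.sum_prod_type]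
  refine Finset.sum_congr rfl fun j _ => ?_
  rw [Fin.sum_univ_two]
  rfl

lemma pairing (n : ℕ) (c : Fin (2 * n) → ZMod 2) (b : Fin n → ZMod 2) :
    ∑ j, projSumMap n c j * b j = ∑ i, c i * doubleMap n b i := by
  rw [sum_pairs n (fun i => c i * doubleMap n b i)]
  refine Finset.sum_congr rfl fun j _ => ?_
  have hj := j.isLt
  have h1 : 2 * j.val < 2 * n := by omega
  have h2 : 2 * j.val + 1 < 2 * n := by omega
  show (c ⟨2 * j.val + 1, h2⟩ + c ((pairSwap n)⁻¹ ⟨2 * j.val + 1, h2⟩)) * b j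
      = c ⟨2 * j.val, h1⟩ * b ⟨(2 * j.val) / 2, by omega⟩ +
        c ⟨2 * j.val + 1, h2⟩ * b ⟨(2 * j.val + 1) / 2, by omega⟩
  rw [pairSwap_inv_odd j.val h2]
  have e1 : (⟨(2 * j.val) / 2, by omega⟩ : Fin n) = j := finMkEq _ (by omega)
  have e2 : (⟨(2 * j.val + 1) / 2, by omega⟩ : Fin n) = j := finMkEq _ (by omega)
  rw [e1, e2]
  ring

lemma doubleMap_projSumMap (n : ℕ) (c : Fin (2 * n) → ZMod 2) :
    doubleMap n (projSumMap n c) = c + fun i => c ((pairSwap n)⁻¹ i) := by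
  funext i
  have hi := i.isLt
  have h2 : 2 * (i.val / 2) + 1 < 2 * n := by omega
  show c ⟨2 * (i.val / 2) + 1, h2⟩ + c ((pairSwap n)⁻¹ ⟨2 * (i.val / 2) + 1, h2⟩)
      = c i + c ⟨2 * (i.val / 2) + (1 - i.val % 2), by omega⟩
  rw [pairSwap_inv_odd (i.val / 2) h2]
  rcases Nat.even_or_odd i.val with he | ho
  · have hm : i.val % 2 = 0 := Nat.even_iff.mp he
    have hi0 : i = ⟨2 * (i.val / 2), by omega⟩ := (finMkEq _ (by show 2 * (i.val / 2) = i.val; omega)).symm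
    have hi1 : (⟨2 * (i.val / 2) + (1 - i.val % 2), by omega⟩ : Fin (2 * n))
        = ⟨2 * (i.val / 2) + 1, h2⟩ := finMkEq _ (by show 2 * (i.val / 2) + (1 - i.val % 2) = 2 * (i.val / 2) + 1; omega)
    rw [hi1, show c i = c ⟨2 * (i.val / 2), by omega⟩ from congrArg c hi0]
    exact add_comm _ _
  · have hm : i.val % 2 = 1 := Nat.odd_iff.mp ho
    have hi0 : i = ⟨2 * (i.val / 2) + 1, h2⟩ := (finMkEq _ (by show 2 * (i.val / 2) + 1 = i.val; omega)).symm
    have hi1 : (⟨2 * (i.val / 2) + (1 - i.val % 2), by omega⟩ : Fin (2 * n))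
        = ⟨2 * (i.val / 2), by omega⟩ := finMkEq _ (by show 2 * (i.val / 2) + (1 - i.val % 2) = 2 * (i.val / 2); omega)
    rw [hi1, show c i = c ⟨2 * (i.val / 2) + 1, h2⟩ from congrArg c hi0]

/-- For a self-dual code `C` of length `2n` invariant under the involution
`σ = (1,2)(3,4)⋯(2n-1,2n)`, the projection of `{c + σ(c) : c ∈ C}` is the dual
of the projection `π(C(σ))` of the fixed code; in particular it is contained
in `π(C(σ))`. -/
theorem proj_image_eq_dual_of_proj_fixed_code
    {n : ℕ} (hn : 0 < n) (C : Submodule (ZMod 2) (Fin (2 * n) → ZMod 2))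
    (hC : C = dualCode C)
    (hσC : ∀ c : Fin (2 * n) → ZMod 2,
      c ∈ C ↔ (fun i => c ((pairSwap n)⁻¹ i)) ∈ C) :
    Submodule.map (projSumMap n) C = dualCode (Submodule.comap (doubleMap n) C) ∧
    Submodule.map (projSumMap n) C ≤ Submodule.comap (doubleMap n) C := by
  set D := Submodule.comap (doubleMap n) C with hD
  set E := Submodule.map (projSumMap n) C with hE
  have hle : E ≤ D := by
    rintro x ⟨c, hc, rfl⟩
    show doubleMap n (projSumMap n c) ∈ C
    rw [doubleMap_projSumMap]
    exact add_mem hc ((hσC c).mp hc)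
  have hled : E ≤ dualCode D := by
    rintro x ⟨c, hc, rfl⟩ b hb
    rw [pairing]
    have hcd : c ∈ dualCode C := hC ▸ hc
    exact hcd (doubleMap n b) hb
  have hCrank : finrank (ZMod 2) C = n := by
    have h := finrank_dualCode C
    rw [← hC] at h
    have h2 : finrank (ZMod 2) C ≤ 2 * n := by simpa using Submodule.finrank_le C
    omega
  let f : C →ₗ[ZMod 2] (Fin n → ZMod 2) := (projSumMap n).comp C.subtype
  have hrange : LinearMap.range f = E := by
    rw [hE, LinearMap.range_comp, Submodule.range_subtype]
  have hdd : ∀ b : Fin n → ZMod 2, ∀ h : b ∈ D, projSumMap n (doubleMap n b) = 0 := by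
    intro b hb
    funext j
    have hj := j.isLt
    have h2 : 2 * j.val + 1 < 2 * n := by omega
    show doubleMap n b ⟨2 * j.val + 1, h2⟩ +
        doubleMap n b ((pairSwap n)⁻¹ ⟨2 * j.val + 1, h2⟩) = 0
    rw [pairSwap_inv_odd j.val h2]
    show b ⟨(2 * j.val + 1) / 2, by omega⟩ + b ⟨(2 * j.val) / 2, by omega⟩ = (0 : ZMod 2)
    have e1 : (⟨(2 * j.val) / 2, by omega⟩ : Fin n) = j := finMkEq _ (by omega)
    have e2 : (⟨(2 * j.val + 1) / 2, by omega⟩ : Fin n) = j := finMkEq _ (by omega)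
    rw [e1, e2]
    exact CharTwo.add_self_eq_zero _
  let g : D →ₗ[ZMod 2] ↥(LinearMap.ker f) :=
    LinearMap.codRestrict (LinearMap.ker f)
      ((doubleMap n).restrict (fun b hb => hb))
      (fun b => LinearMap.mem_ker.mpr (hdd b.1 b.2))
  have hg : Function.Bijective g := by
    constructor
    · intro a b hab
      apply Subtype.ext
      have h0 : doubleMap n a.1 = doubleMap n b.1 :=
        congrArg (fun x : ↥(LinearMap.ker f) => (x.1 : Fin (2 * n) → ZMod 2)) hab
      funext j
      have hj := j.isLt
      have h1 : 2 * j.val < 2 * n := by omega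
      have h3 : (2 * j.val) / 2 < n := by omega
      have key : a.1 ⟨(2 * j.val) / 2, h3⟩ = b.1 ⟨(2 * j.val) / 2, h3⟩ :=
        congrFun h0 ⟨2 * j.val, h1⟩
      have e1 : (⟨(2 * j.val) / 2, h3⟩ : Fin n) = j := finMkEq _ (by omega)
      rw [e1] at key
      exact key
    · rintro ⟨⟨c, hc⟩, hker⟩
      have hker' : projSumMap n c = 0 := hker
      have hpair : ∀ j : ℕ, ∀ h1 : 2 * j < 2 * n,
          c ⟨2 * j + 1, by omega⟩ = c ⟨2 * j, h1⟩ := by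
        intro j h1
        have hjn : j < n := by omega
        have hcj := congrFun hker' ⟨j, hjn⟩
        have h2 : 2 * j + 1 < 2 * n := by omega
        rw [show (projSumMap n c ⟨j, hjn⟩)
            = c ⟨2 * j + 1, h2⟩ + c ((pairSwap n)⁻¹ ⟨2 * j + 1, h2⟩) from rfl,
          pairSwap_inv_odd j h2] at hcj
        have key : ∀ a b : ZMod 2, a + b = 0 → a = b := by decide
        exact key _ _ hcj
      have hbC : doubleMap n (fun j : Fin n => c ⟨2 * j.val, by have := j.isLt; omega⟩) = c := by
        funext i
        have hi := i.isLt
        show c ⟨2 * (i.val / 2), by omega⟩ = c i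
        rcases Nat.even_or_odd i.val with he | ho
        · have hm : i.val % 2 = 0 := Nat.even_iff.mp he
          exact congrArg c (finMkEq _ (by omega))
        · have hm : i.val % 2 = 1 := Nat.odd_iff.mp ho
          have h1 : 2 * (i.val / 2) < 2 * n := by omega
          rw [← hpair (i.val / 2) h1]
          exact congrArg c (finMkEq _ (by omega))
      refine ⟨⟨fun j : Fin n => c ⟨2 * j.val, by have := j.isLt; omega⟩,
        Submodule.mem_comap.mpr (by rw [hbC]; exact hc)⟩, ?_⟩
      apply Subtype.ext
      apply Subtype.ext
      exact hbC
  have hkerrank : finrank (ZMod 2) (LinearMap.ker f) = finrank (ZMod 2) D :=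
    (LinearEquiv.ofBijective g hg).finrank_eq.symm
  have hrn := LinearMap.finrank_range_add_finrank_ker f
  rw [hrange, hkerrank, hCrank] at hrn
  have hDle : finrank (ZMod 2) D ≤ n := by simpa using Submodule.finrank_le D
  have hdual := finrank_dualCode D
  have heq : E = dualCode D :=
    Submodule.eq_of_le_of_finrank_le hled (by omega)
  exact ⟨heq, hle⟩
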